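/- Let A, B, C, D be n×n matrices over the tropical semiring such that B = C ⊗ A and A = D ⊗ B (tropical matrix products). If B has full row rank, then there exists a monomial tropical n×n matrix P such that B = P ⊗ A. -/

import Mathlib

/-- The tropical (max-plus) semiring carrier: `ℝ ∪ {-∞}`, with `⊥` playing the
role of `-∞`.  Tropical addition is `⊔` (max) and tropical multiplication is
`+` (with `⊥ + x = x + ⊥ = ⊥`). -/
abbrev Trop : Type := WithBot ℝ

/-- Tropical matrix multiplication: `(A ⊗ B) i j = max_k (A i k + B k j)`. -/
def tropMulMat {n m p : ℕ} (A : Matrix (Fin n) (Fin m) Trop)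
    (B : Matrix (Fin m) (Fin p) Trop) : Matrix (Fin n) (Fin p) Trop :=
  fun i j => Finset.univ.sup fun k => A i k + B k j

/-- A tropical matrix has full row rank if no row is a tropical linear
combination of the other rows. -/
def FullRowRank {n m : ℕ} (B : Matrix (Fin n) (Fin m) Trop) : Prop :=
  ¬ ∃ (i : Fin n) (lam : Fin n → Trop),
      ∀ t, B i t = (Finset.univ.erase i).sup fun k => lam k + B k t

/-- A tropical square matrix is monomial if there is a permutation `σ` with
`P i j ≠ -∞ ↔ i = σ j`. -/
def IsMonomial {n : ℕ} (P : Matrix (Fin n) (Fin n) Trop) : Prop :=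
  ∃ σ : Equiv.Perm (Fin n), ∀ i j, P i j ≠ ⊥ ↔ i = σ j

lemma trop_add_sup_left {α : Type*} (s : Finset α) (f : α → Trop) (a : Trop) :
    a + s.sup f = s.sup (fun x => a + f x) := by
  induction s using Finset.cons_induction with
  | empty => simp
  | cons x s hx ih =>
    rw [Finset.sup_cons, Finset.sup_cons, ← ih]
    rcases le_total (f x) (s.sup f) with h | h
    · rw [sup_eq_right.mpr h, sup_eq_right.mpr (add_le_add le_rfl h)]
    · rw [sup_eq_left.mpr h, sup_eq_left.mpr (add_le_add le_rfl h)]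

lemma trop_sup_add_right {α : Type*} (s : Finset α) (f : α → Trop) (a : Trop) :
    s.sup f + a = s.sup (fun x => f x + a) := by
  induction s using Finset.cons_induction with
  | empty => simp
  | cons x s hx ih =>
    rw [Finset.sup_cons, Finset.sup_cons, ← ih]
    rcases le_total (f x) (s.sup f) with h | h
    · rw [sup_eq_right.mpr h, sup_eq_right.mpr (add_le_add h le_rfl)]
    · rw [sup_eq_left.mpr h, sup_eq_left.mpr (add_le_add h le_rfl)]

lemma tropMul_assoc {n m p q : ℕ} (X : Matrix (Fin n) (Fin m) Trop)
    (Y : Matrix (Fin m) (Fin p) Trop) (Z : Matrix (Fin p) (Fin q) Trop) :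
    tropMulMat (tropMulMat X Y) Z = tropMulMat X (tropMulMat Y Z) := by
  funext i t
  unfold tropMulMat
  simp only [trop_sup_add_right, trop_add_sup_left]
  rw [Finset.sup_comm]
  congr 1; funext l; congr 1; funext k; rw [add_assoc]

lemma trop_sup_single {α : Type*} [DecidableEq α] (s : Finset α) (f : α → Trop) (a : α)
    (ha : a ∈ s) (h : ∀ x ∈ s, x ≠ a → f x = ⊥) : s.sup f = f a := by
  apply le_antisymm
  · refine Finset.sup_le fun x hx => ?_
    by_cases hxa : x = a
    · subst hxa; exact le_rfl
    · rw [h x hx hxa]; exact bot_le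
  · exact Finset.le_sup ha

theorem monomial_factorization {n : ℕ} (A B C D : Matrix (Fin n) (Fin n) Trop)
    (hB : B = tropMulMat C A) (hA : A = tropMulMat D B)
    (hfull : FullRowRank B) :
    ∃ P : Matrix (Fin n) (Fin n) Trop, IsMonomial P ∧ B = tropMulMat P A := by
  classical
  set E : Matrix (Fin n) (Fin n) Trop := tropMulMat C D with hE
  have hEB : tropMulMat E B = B := by
    rw [hE, tropMul_assoc, ← hA, ← hB]
  -- pointwise: B i t = sup_k (E i k + B k t)
  have hsup : ∀ i t, B i t = Finset.univ.sup (fun k => E i k + B k t) := by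
    intro i t
    conv_lhs => rw [← hEB]
    rfl
  have hle : ∀ i j t, E i j + B j t ≤ B i t := by
    intro i j t
    rw [hsup i t]
    exact Finset.le_sup (f := fun k => E i k + B k t) (Finset.mem_univ j)
  -- full row rank, unfolded
  have hfull' : ∀ (i : Fin n) (lam : Fin n → Trop),
      ∃ t, B i t ≠ (Finset.univ.erase i).sup fun k => lam k + B k t := by
    intro i lam
    by_contra h
    push_neg at h
    exact hfull ⟨i, lam, h⟩
  -- E i i = 0
  have hdiag : ∀ i, E i i = 0 := by
    intro i
    obtain ⟨t, ht⟩ := hfull' i (fun k => E i k)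
    have hins : (Finset.univ : Finset (Fin n)) = insert i (Finset.univ.erase i) :=
      (Finset.insert_erase (Finset.mem_univ i)).symm
    have hsplit : B i t = (E i i + B i t) ⊔
        ((Finset.univ.erase i).sup fun k => E i k + B k t) := by
      conv_lhs => rw [hsup i t, hins, Finset.sup_insert]
    have heq : E i i + B i t = B i t := by
      rcases le_total (E i i + B i t)
        ((Finset.univ.erase i).sup fun k => E i k + B k t) with h | h
      · rw [sup_eq_right.mpr h] at hsplit
        exact absurd hsplit ht
      · rw [sup_eq_left.mpr h] at hsplit
        exact hsplit.symm
    have hbne : B i t ≠ ⊥ := by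
      intro hb
      apply ht
      rw [hb]
      refine le_antisymm bot_le ?_
      have h2 : ((Finset.univ.erase i).sup fun k => E i k + B k t) ≤ B i t :=
        Finset.sup_le fun j _ => hle i j t
      rw [hb] at h2
      exact h2
    obtain ⟨r, hr⟩ := WithBot.ne_bot_iff_exists.mp hbne
    rw [← hr] at heq
    cases hEii : E i i with
    | none =>
      rw [hEii] at heq
      have heq' : (⊥ : Trop) + (r : Trop) = (r : Trop) := heq
      rw [WithBot.bot_add] at heq'
      exact absurd heq'.symm WithBot.coe_ne_bot
    | some x =>
      rw [hEii] at heq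
      have heq' : (x : Trop) + (r : Trop) = (r : Trop) := heq
      rw [← WithBot.coe_add, WithBot.coe_inj] at heq'
      have hxr : x + r = r := heq'
      have hx : x = 0 := by linarith
      subst hx
      rfl
  -- off-diagonal: ¬ (0 ≤ E i j + E j i)
  have hoff : ∀ i j, i ≠ j → ¬ (0 : Trop) ≤ E i j + E j i := by
    intro i j hij hge
    have hrow : ∀ t, B i t = E i j + B j t := by
      intro t
      refine le_antisymm ?_ (hle i j t)
      calc B i t = 0 + B i t := (zero_add _).symm
        _ ≤ (E i j + E j i) + B i t := add_le_add hge le_rfl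
        _ = E i j + (E j i + B i t) := add_assoc _ _ _
        _ ≤ E i j + B j t := add_le_add le_rfl (hle j i t)
    obtain ⟨t, ht⟩ := hfull' i (fun k => if k = j then E i j else ⊥)
    apply ht
    rw [hrow t]
    have hjmem : j ∈ Finset.univ.erase i := by
      simp [Ne.symm hij]
    rw [trop_sup_single (Finset.univ.erase i) _ j hjmem]
    · simp
    · intro x _ hxj
      simp [hxj]
  -- choose k i with C i (k i) + D (k i) i = 0
  have hkex : ∀ i, ∃ m, C i m + D m i = 0 := by
    intro i
    have hne : (Finset.univ : Finset (Fin n)).Nonempty := ⟨i, Finset.mem_univ i⟩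
    obtain ⟨m, _, hm⟩ := Finset.exists_mem_eq_sup Finset.univ hne
      (fun m => C i m + D m i)
    exact ⟨m, by rw [← hm, ← hdiag i]; rfl⟩
  choose k hk using hkex
  have hEge : ∀ i j m, C i m + D m j ≤ E i j := fun i j m =>
    Finset.le_sup (f := fun l => C i l + D l j) (Finset.mem_univ m)
  have hkinj : Function.Injective k := by
    intro i j hkij
    by_contra hij
    apply hoff i j hij
    calc (0 : Trop) = (C i (k i) + D (k i) i) + (C j (k j) + D (k j) j) := by
          rw [hk i, hk j]; simp
      _ = (C i (k i) + D (k i) j) + (C j (k j) + D (k j) i) := by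
          rw [hkij]; abel
      _ ≤ E i j + E j i := add_le_add (hEge i j (k i)) (hEge j i (k j))
  have hCne : ∀ i, C i (k i) ≠ ⊥ := by
    intro i hc
    have h0 := hk i
    rw [hc] at h0
    simp at h0
  have hDleA : ∀ i t, D (k i) i + B i t ≤ A (k i) t := by
    intro i t
    have : A (k i) t = Finset.univ.sup (fun j => D (k i) j + B j t) := by
      rw [hA]; rfl
    rw [this]
    exact Finset.le_sup (f := fun j => D (k i) j + B j t) (Finset.mem_univ i)
  let σ : Equiv.Perm (Fin n) :=
    Equiv.ofBijective k (Finite.injective_iff_bijective.mp hkinj)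
  let P : Matrix (Fin n) (Fin n) Trop := fun i j => if j = k i then C i (k i) else ⊥
  refine ⟨P, ⟨σ.symm, ?_⟩, ?_⟩
  · intro i j
    have hiff : (i = σ.symm j) ↔ j = k i := by
      rw [Equiv.eq_symm_apply]
      exact ⟨fun h => h.symm, fun h => h.symm⟩
    rw [hiff]
    by_cases hj : j = k i
    · simp [P, hj, hCne i]
    · simp [P, hj]
  · funext i t
    have hPA : tropMulMat P A i t = C i (k i) + A (k i) t := by
      show Finset.univ.sup (fun j => P i j + A j t) = _
      rw [trop_sup_single Finset.univ _ (k i) (Finset.mem_univ _)]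
      · simp [P]
      · intro x _ hx
        simp [P, hx]
    rw [hPA]
    apply le_antisymm
    · calc B i t = 0 + B i t := (zero_add _).symm
        _ = (C i (k i) + D (k i) i) + B i t := by rw [hk i]
        _ = C i (k i) + (D (k i) i + B i t) := add_assoc _ _ _
        _ ≤ C i (k i) + A (k i) t := add_le_add le_rfl (hDleA i t)
    · have : B i t = Finset.univ.sup (fun j => C i j + A j t) := by
        rw [hB]; rfl
      rw [this]
      exact Finset.le_sup (f := fun j => C i j + A j t) (Finset.mem_univ (k i))
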